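/- Let V be an optimal prefix-free machine and let f : {0,1}* → ℕ be a right-computable function such that #V⁻¹(s) ≤ f(s) for all finite binary strings s. Then f(s) − #V⁻¹(s) tends to infinity as s → ∞, where finite binary strings are identified with natural numbers via the bijection φ(s) = (the dyadic integer 1s) − 1; that is, for every M ∈ ℕ, f(s) − #V⁻¹(s) ≥ M for all but finitely many s. -/

import Mathlib

open scoped ENNReal

/-- A set of binary strings is prefix-free: no element is a proper prefix of another. -/
def PrefixFreeSet (S : Set (List Bool)) : Prop :=
  ∀ p ∈ S, ∀ q ∈ S, p <+: q → p = q

/-- A prefix-free machine: a partial recursive function on binary strings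
whose domain is a prefix-free set. -/
def PFMachine (C : List Bool →. List Bool) : Prop :=
  Partrec C ∧ PrefixFreeSet C.Dom

/-- `Hm C s` is the length of a shortest program `p` with `C p = s` (`∞` if none). -/
noncomputable def Hm (C : List Bool →. List Bool) (s : List Bool) : ℕ∞ :=
  sInf ((fun p : List Bool => (p.length : ℕ∞)) '' {p | s ∈ C p})

/-- An optimal prefix-free machine: for every prefix-free machine `C` there is `d ∈ ℕ`
such that every `p ∈ dom C` has a `q` with `U q = C p` and `|q| ≤ |p| + d`. -/
def OptimalPFM (U : List Bool →. List Bool) : Prop :=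
  PFMachine U ∧ ∀ C : List Bool →. List Bool, PFMachine C →
    ∃ d : ℕ, ∀ p s, s ∈ C p → ∃ q : List Bool, s ∈ U q ∧ q.length ≤ p.length + d

/-- The binary string identified with `n : ℕ` via `φ(s) = (the dyadic integer 1s) − 1`. -/
def strOfNat (n : ℕ) : List Bool := ((n + 1).bits.dropLast).reverse

/-- `f` is right-computable if `{(s,n) | f s ≤ n}` is r.e. -/
def RightComputable (f : List Bool → ℕ) : Prop :=
  REPred fun q : List Bool × ℕ => f q.1 ≤ q.2

namespace CFD
open Encodable
open Nat.Partrec (Code)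
open Nat.Partrec.Code


def progs (cV : Code) (t : ℕ) (s : List Bool) : List (List Bool) :=
  (List.range t).filterMap fun m =>
    (decode₂ (List Bool) m).bind fun p =>
      if evaln t cV m = some (Encodable.encode s) then some p else none

def count (cV : Code) (t : ℕ) (s : List Bool) : ℕ := (progs cV t s).length

def haltB (cV cf : Code) (c t : ℕ) (s : List Bool) : Bool :=
  (evaln t cf (Encodable.encode (s, count cV t s + c))).isSome

def badList (cV : Code) (k t : ℕ) (s : List Bool) : List (List Bool) :=
  (progs cV t s).filterMap fun p => if p.length < 2 * k then some p else none

def Fm (cV cf : Code) (c k j : ℕ) : Option (List Bool) :=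
  (decode₂ (List Bool) j.unpair.1).bind fun s =>
    if k ≤ j.unpair.1 ∧ haltB cV cf c j.unpair.2 s = true ∧ badList cV k j.unpair.2 s = []
    then some s else none

def kOf (p : List Bool) : Option ℕ :=
  if p = List.replicate (p.length - 1) false ++ [true] then some (p.length - 1) else none

def machC (cV cf : Code) (c : ℕ) : List Bool →. List Bool :=
  fun p => (Part.ofOption (kOf p)).bind fun k => Nat.rfindOpt (Fm cV cf c k)


theorem mem_progs {cV : Code} {t : ℕ} {s p : List Bool} :
    p ∈ progs cV t s ↔ Encodable.encode p < t ∧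
      evaln t cV (Encodable.encode p) = some (Encodable.encode s) := by
  simp only [progs, List.mem_filterMap, List.mem_range, Option.bind_eq_some_iff]
  constructor
  · rintro ⟨m, hm, q, hq, h⟩
    rw [decode₂_eq_some] at hq
    split at h
    · cases h; subst hq; exact ⟨hm, ‹_›⟩
    · cases h
  · rintro ⟨h1, h2⟩
    exact ⟨_, h1, p, decode₂_eq_some.2 rfl, by rw [if_pos h2]⟩

theorem progs_nodup (cV : Code) (t : ℕ) (s : List Bool) : (progs cV t s).Nodup := by
  apply List.Nodup.filterMap ?_ (List.nodup_range (n := t))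
  rintro a a' b hb hb'
  simp only [Option.mem_def, Option.bind_eq_some_iff] at hb hb'
  obtain ⟨q, hq, h⟩ := hb
  obtain ⟨q', hq', h'⟩ := hb'
  rw [decode₂_eq_some] at hq hq'
  split at h <;> cases h
  split at h' <;> cases h'
  rw [← hq, ← hq']

theorem count_eq_card (cV : Code) (t : ℕ) (s : List Bool) :
    count cV t s = (progs cV t s).toFinset.card := by
  rw [count, List.toFinset_card_of_nodup (progs_nodup cV t s)]

theorem count_mono {cV : Code} {t t' : ℕ} (h : t ≤ t') (s : List Bool) :
    count cV t s ≤ count cV t' s := by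
  rw [count_eq_card, count_eq_card]
  apply Finset.card_le_card
  intro p hp
  simp only [List.mem_toFinset] at *
  obtain ⟨h1, h2⟩ := mem_progs.1 hp
  exact mem_progs.2 ⟨lt_of_lt_of_le h1 h, evaln_mono h h2⟩


theorem badList_eq_nil {cV : Code} {k t : ℕ} {s : List Bool} :
    badList cV k t s = [] ↔ ∀ p ∈ progs cV t s, 2 * k ≤ p.length := by
  rw [badList, List.filterMap_eq_nil_iff]
  constructor
  · intro h p hp
    have := h p hp
    by_contra hc
    rw [if_pos (by omega)] at this
    exact Option.some_ne_none _ this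
  · intro h p hp
    rw [if_neg (by have := h p hp; omega)]

theorem Fm_eq_some {cV cf : Code} {c k j : ℕ} {s : List Bool} :
    Fm cV cf c k j = some s ↔ Encodable.encode s = j.unpair.1 ∧ k ≤ j.unpair.1 ∧
      haltB cV cf c j.unpair.2 s = true ∧ badList cV k j.unpair.2 s = [] := by
  rw [Fm, Option.bind_eq_some_iff]
  constructor
  · rintro ⟨s', hs', h⟩
    rw [decode₂_eq_some] at hs'
    split at h
    · cases h; exact ⟨hs', ‹_›⟩
    · cases h
  · rintro ⟨h1, h2⟩
    exact ⟨s, decode₂_eq_some.2 h1, by rw [if_pos h2]⟩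

theorem kOf_replicate (k : ℕ) : kOf (List.replicate k false ++ [true]) = some k := by
  have hl : (List.replicate k false ++ [true]).length - 1 = k := by simp
  rw [kOf, hl, if_pos rfl]

theorem kOf_eq_some {p : List Bool} {k : ℕ} (h : kOf p = some k) :
    p = List.replicate k false ++ [true] := by
  rw [kOf] at h
  split at h
  · cases h; assumption
  · cases h

theorem replicate_prefix_inj {k j : ℕ}
    (h : (List.replicate k false ++ [true]) <+: (List.replicate j false ++ [true])) : k = j := by
  rcases Nat.lt_or_ge k j with hk | hk
  · exfalso
    have hn : k < (List.replicate k false ++ [true]).length := by simp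
    have h2 := List.IsPrefix.getElem h hn
    simp [List.getElem_append, hk] at h2
  · have hlen := h.length_le
    simp at hlen
    omega

theorem machC_prefixFree (cV cf : Code) (c : ℕ) :
    ∀ p ∈ (machC cV cf c).Dom, ∀ q ∈ (machC cV cf c).Dom, p <+: q → p = q := by
  intro p hp q hq hpq
  simp only [PFun.mem_dom] at hp hq
  obtain ⟨y, hy⟩ := hp
  obtain ⟨z, hz⟩ := hq
  simp only [machC, Part.mem_bind_iff, Part.mem_ofOption, Option.mem_def] at hy hz
  obtain ⟨k, hk, -⟩ := hy
  obtain ⟨l, hl, -⟩ := hz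
  rw [kOf_eq_some hk] at hpq ⊢
  rw [kOf_eq_some hl] at hpq ⊢
  rw [replicate_prefix_inj hpq]

theorem mem_machC_iff {cV cf : Code} {c k : ℕ} {s : List Bool} :
    s ∈ machC cV cf c (List.replicate k false ++ [true]) ↔ s ∈ Nat.rfindOpt (Fm cV cf c k) := by
  simp only [machC, Part.mem_bind_iff, Part.mem_ofOption, Option.mem_def, kOf_replicate]
  constructor
  · rintro ⟨l, hl, h⟩; cases hl; exact h
  · intro h; exact ⟨k, rfl, h⟩

theorem machC_dom_of {cV cf : Code} {c k j : ℕ} {s : List Bool}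
    (h : Fm cV cf c k j = some s) :
    ∃ s', s' ∈ machC cV cf c (List.replicate k false ++ [true]) := by
  have hdom : (Nat.rfindOpt (Fm cV cf c k)).Dom := Nat.rfindOpt_dom.2 ⟨j, s, h⟩
  exact ⟨_, mem_machC_iff.2 (Part.get_mem hdom)⟩

theorem mem_machC_elim {cV cf : Code} {c k : ℕ} {s : List Bool}
    (h : s ∈ machC cV cf c (List.replicate k false ++ [true])) :
    ∃ j, Fm cV cf c k j = some s :=
  Nat.rfindOpt_spec (mem_machC_iff.1 h)


section Sem
variable {V : List Bool →. List Bool} {cV : Code}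
  (hEV : eval cV = fun n => Part.bind
    ((Encodable.decode (α := List Bool) n : Option (List Bool)) : Part (List Bool))
    fun a => (V a).map Encodable.encode)
  {f : List Bool → ℕ} {cf : Code}
  (hEf : eval cf = fun n => Part.bind
    ((Encodable.decode (α := List Bool × ℕ) n : Option (List Bool × ℕ)) : Part (List Bool × ℕ))
    fun q => (Part.assert (f q.1 ≤ q.2) fun _ => Part.some ()).map Encodable.encode)

include hEV in
theorem progs_sound {t : ℕ} {s p : List Bool} (h : p ∈ progs cV t s) : s ∈ V p := by
  obtain ⟨-, h2⟩ := mem_progs.1 h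
  have := evaln_sound h2
  rw [hEV] at this
  simp only [Part.mem_bind_iff, Part.mem_map_iff, Part.coe_some, Part.mem_some_iff,
    Encodable.encodek, Part.mem_ofOption, Option.mem_def] at this
  obtain ⟨a, ha, s', hs', hss⟩ := this
  cases ha; cases encode_injective hss; exact hs'

include hEV in
theorem progs_complete {s p : List Bool} (h : s ∈ V p) :
    ∃ t, p ∈ progs cV t s := by
  have : Encodable.encode s ∈ eval cV (Encodable.encode p) := by
    rw [hEV]
    simp only [Part.mem_bind_iff, Part.mem_map_iff]
    exact ⟨p, by simp [Encodable.encodek], s, h, rfl⟩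
  obtain ⟨t, ht⟩ := evaln_complete.1 this
  exact ⟨t, mem_progs.2 ⟨evaln_bound ht, ht⟩⟩

include hEV in
theorem exists_full (hfin : {p : List Bool | s ∈ V p}.Finite) :
    ∃ t₀, ∀ t, t₀ ≤ t → (∀ p, p ∈ progs cV t s ↔ s ∈ V p) ∧
      count cV t s = {p : List Bool | s ∈ V p}.ncard := by
  classical
  set F := hfin.toFinset with hF
  set w : List Bool → ℕ := fun p => if h : s ∈ V p then (progs_complete hEV h).choose else 0
    with hw
  refine ⟨F.sup w, fun t ht => ?_⟩
  have key : ∀ p, p ∈ progs cV t s ↔ s ∈ V p := by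
    intro p
    constructor
    · exact progs_sound hEV
    · intro hp
      have h1 : p ∈ progs cV (w p) s := by
        rw [hw]; simp only [hp, dif_pos]
        exact (progs_complete hEV hp).choose_spec
      have h2 : w p ≤ t := le_trans (Finset.le_sup (by simp [hF, hp])) ht
      obtain ⟨ha, hb⟩ := mem_progs.1 h1
      exact mem_progs.2 ⟨lt_of_lt_of_le ha h2, evaln_mono h2 hb⟩
  refine ⟨key, ?_⟩
  rw [count_eq_card, Set.ncard_eq_toFinset_card _ hfin]
  congr 1
  ext p
  simp [key p]

include hEf in
theorem halt_sound {c t : ℕ} {s : List Bool} (h : haltB cV cf c t s = true) :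
    f s ≤ count cV t s + c := by
  rw [haltB, Option.isSome_iff_exists] at h
  obtain ⟨x, hx⟩ := h
  have := evaln_sound (c := cf) (x := x) hx
  rw [hEf] at this
  simp only [Part.mem_bind_iff, Part.mem_map_iff, Part.mem_ofOption, Option.mem_def,
    Encodable.encodek, Part.mem_assert_iff] at this
  obtain ⟨q, hq, u, ⟨hle, -⟩, -⟩ := this
  cases hq
  exact hle

include hEV hEf in
theorem halt_exists {c : ℕ} {s : List Bool} (hfin : {p : List Bool | s ∈ V p}.Finite)
    (h : f s ≤ {p : List Bool | s ∈ V p}.ncard + c) :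
    ∃ t, haltB cV cf c t s = true := by
  obtain ⟨t₀, ht₀⟩ := exists_full hEV hfin
  have hdom : Encodable.encode () ∈ eval cf
      (Encodable.encode (s, {p : List Bool | s ∈ V p}.ncard + c)) := by
    rw [hEf]
    simp only [Part.mem_bind_iff, Part.mem_map_iff, Part.mem_ofOption, Option.mem_def,
      Encodable.encodek, Part.mem_assert_iff]
    exact ⟨_, rfl, (), ⟨h, Part.mem_some _⟩, trivial⟩
  obtain ⟨t₁, ht₁⟩ := evaln_complete.1 hdom
  refine ⟨max t₀ t₁, ?_⟩
  rw [haltB, (ht₀ _ (le_max_left _ _)).2, Option.isSome_iff_exists]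
  exact ⟨_, evaln_mono (le_max_right _ _) ht₁⟩

include hEV hEf in
theorem halt_full {c t : ℕ} {s : List Bool} (hfin : {p : List Bool | s ∈ V p}.Finite)
    (hge : {p : List Bool | s ∈ V p}.ncard + c ≤ f s)
    (h : haltB cV cf c t s = true) :
    ∀ p, p ∈ progs cV t s ↔ s ∈ V p := by
  have h1 : f s ≤ count cV t s + c := halt_sound hEf h
  have h2 : {p : List Bool | s ∈ V p}.ncard ≤ count cV t s := by omega
  have hsub : (progs cV t s).toFinset ⊆ hfin.toFinset := by
    intro p hp
    simp only [List.mem_toFinset, Set.Finite.mem_toFinset] at *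
    exact progs_sound hEV hp
  have heq : (progs cV t s).toFinset = hfin.toFinset := by
    apply Finset.eq_of_subset_of_card_le hsub
    rw [← count_eq_card]
    rwa [Set.ncard_eq_toFinset_card _ hfin] at h2
  intro p
  rw [← List.mem_toFinset, heq, Set.Finite.mem_toFinset]
  rfl

end Sem

open Primrec in
theorem progs_prim (cV : Code) : Primrec (fun x : ℕ × List Bool => progs cV x.1 x.2) := by
  have := Primrec.listFilterMap
    (f := fun x : ℕ × List Bool => List.range x.1)
    (g := fun (x : ℕ × List Bool) (m : ℕ) =>
      (decode₂ (List Bool) m).bind fun p =>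
        if evaln x.1 cV m = some (Encodable.encode x.2) then some p else none)
    (list_range.comp fst)
    (Primrec.option_bind (Primrec.decode₂.comp snd)
      (Primrec.ite
        ((PrimrecRel.comp Primrec.eq
          (primrec_evaln.comp ((((fst.comp (fst.comp fst))).pair (const cV)).pair (snd.comp fst)))
          (option_some.comp (Primrec.encode.comp (snd.comp (fst.comp fst))))) :
            PrimrecPred fun y : ((ℕ × List Bool) × ℕ) × List Bool =>
              evaln y.1.1.1 cV y.1.2 = some (Encodable.encode y.1.1.2))
        (option_some.comp snd) (const none)).to₂)
  exact this


open Primrec in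
theorem count_prim (cV : Code) : Primrec (fun x : ℕ × List Bool => count cV x.1 x.2) :=
  list_length.comp (progs_prim cV)

open Primrec in
theorem haltB_prim (cV cf : Code) (c : ℕ) :
    Primrec (fun x : ℕ × List Bool => haltB cV cf c x.1 x.2) :=
  option_isSome.comp <| primrec_evaln.comp <|
    (fst.pair (const cf)).pair <|
      Primrec.encode.comp <| snd.pair <| nat_add.comp (count_prim cV) (const c)

open Primrec in
theorem badList_prim (cV : Code) :
    Primrec (fun x : (ℕ × ℕ) × List Bool => badList cV x.1.1 x.1.2 x.2) := by
  have := Primrec.listFilterMap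
    (f := fun x : (ℕ × ℕ) × List Bool => progs cV x.1.2 x.2)
    (g := fun (x : (ℕ × ℕ) × List Bool) (p : List Bool) =>
      if p.length < 2 * x.1.1 then some p else none)
    ((progs_prim cV).comp ((snd.comp fst).pair snd))
    (Primrec.ite
      ((PrimrecRel.comp Primrec.nat_lt (list_length.comp snd)
        (nat_mul.comp (const 2) (fst.comp (fst.comp fst)))) :
          PrimrecPred fun y : ((ℕ × ℕ) × List Bool) × List Bool => y.2.length < 2 * y.1.1.1)
      (option_some.comp snd) (const none)).to₂
  exact this

open Primrec in
theorem Fm_prim (cV cf : Code) (c : ℕ) : Primrec₂ (Fm cV cf c) := by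
  have hcond : PrimrecPred fun y : (ℕ × ℕ) × List Bool =>
      y.1.1 ≤ y.1.2.unpair.1 ∧ haltB cV cf c y.1.2.unpair.2 y.2 = true ∧
        badList cV y.1.1 y.1.2.unpair.2 y.2 = [] := by
    apply PrimrecPred.and
    · exact PrimrecRel.comp Primrec.nat_le (fst.comp fst)
        (fst.comp (Primrec.unpair.comp (snd.comp fst)))
    apply PrimrecPred.and
    · exact PrimrecRel.comp Primrec.eq
        ((haltB_prim cV cf c).comp ((snd.comp (Primrec.unpair.comp (snd.comp fst))).pair snd))
        (const true)
    · exact PrimrecRel.comp Primrec.eq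
        ((badList_prim cV).comp
          (((fst.comp fst).pair (snd.comp (Primrec.unpair.comp (snd.comp fst)))).pair snd))
        (const ([] : List (List Bool)))
  have : Primrec fun x : ℕ × ℕ =>
      (decode₂ (List Bool) x.2.unpair.1).bind fun s =>
        if x.1 ≤ x.2.unpair.1 ∧ haltB cV cf c x.2.unpair.2 s = true ∧
            badList cV x.1 x.2.unpair.2 s = [] then some s else none :=
    Primrec.option_bind (Primrec.decode₂.comp (fst.comp (Primrec.unpair.comp snd)))
      (Primrec.ite hcond (option_some.comp snd) (const none)).to₂
  exact this

open Primrec in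
theorem kOf_prim : Primrec kOf := by
  have hrep : Primrec fun p : List Bool => List.replicate (p.length - 1) false := by
    have := Primrec.list_map
      (f := fun p : List Bool => List.range (p.length - 1))
      (g := fun (_ : List Bool) (_ : ℕ) => false)
      (list_range.comp (nat_sub.comp list_length (const 1))) (const false).to₂
    refine this.of_eq fun p => ?_
    simp [List.map_const', List.eq_replicate_iff]
  have hcand : Primrec fun p : List Bool => List.replicate (p.length - 1) false ++ [true] :=
    list_append.comp hrep (const [true])
  exact Primrec.ite (PrimrecRel.comp Primrec.eq Primrec.id hcand)
    (option_some.comp (nat_sub.comp list_length (const 1))) (const none)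

theorem machC_partrec (cV cf : Code) (c : ℕ) : Partrec (machC cV cf c) := by
  have h1 : Partrec fun p : List Bool => (Part.ofOption (kOf p)) :=
    Computable.ofOption kOf_prim.to_comp
  have h2 : Partrec₂ fun (_ : List Bool) (k : ℕ) => Nat.rfindOpt (Fm cV cf c k) :=
    Partrec.rfindOpt (((Fm_prim cV cf c).to_comp).comp
      (Computable.snd.comp Computable.fst) Computable.snd).to₂
  exact h1.bind h2


end CFD

open CFD Encodable

/-- If `V` is optimal and `#V⁻¹(s) ≤ f(s)` for all `s` with `f` right-computable, then
`f(s) − #V⁻¹(s) → ∞` as `s → ∞`: for every `M`, `f(s) − #V⁻¹(s) ≥ M` (i.e. not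
`f(s) < #V⁻¹(s) + M`) for all but finitely many strings `s`. -/
theorem card_fiber_diff_tendsto_atTop (V : List Bool →. List Bool)
    (hV : OptimalPFM V) (f : List Bool → ℕ) (hf : RightComputable f)
    (hfin : ∀ s, {p : List Bool | s ∈ V p}.Finite)
    (hle : ∀ s, {p : List Bool | s ∈ V p}.ncard ≤ f s) :
    ∀ M : ℕ, {s : List Bool | f s < {p : List Bool | s ∈ V p}.ncard + M}.Finite := by
  classical
  intro M
  by_contra hinf'
  have hinf : {s : List Bool | f s < {p : List Bool | s ∈ V p}.ncard + M}.Infinite := hinf'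
  -- M ≠ 0
  rcases Nat.eq_zero_or_pos M with h0 | hMpos
  · subst h0
    apply hinf'
    convert Set.finite_empty
    ext s
    simp only [Set.mem_setOf_eq, Set.mem_empty_iff_false, iff_false, not_lt, Nat.add_zero]
    exact hle s
  -- minimal c with infinitely many s such that f s ≤ ncard + c
  have hex : ∃ c : ℕ, {s : List Bool | f s ≤ {p : List Bool | s ∈ V p}.ncard + c}.Infinite := by
    refine ⟨M - 1, hinf.mono fun s hs => ?_⟩
    simp only [Set.mem_setOf_eq] at hs ⊢
    omega
  set c := Nat.find hex with hc
  have hTinf := Nat.find_spec hex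
  have hE : {s : List Bool | f s < {p : List Bool | s ∈ V p}.ncard + c}.Finite := by
    rcases Nat.eq_zero_or_pos c with hc0 | hcpos
    · rw [hc0]
      convert Set.finite_empty
      ext s
      simp only [Set.mem_setOf_eq, Set.mem_empty_iff_false, iff_false, not_lt, Nat.add_zero]
      exact hle s
    · have := Nat.find_min hex (m := c - 1) (by omega)
      rw [Set.not_infinite] at this
      refine this.subset fun s hs => ?_
      simp only [Set.mem_setOf_eq] at hs ⊢
      omega
  -- extract codes
  have hV1 : Nat.Partrec fun n => Part.bind
      ((Encodable.decode (α := List Bool) n : Option (List Bool)) : Part (List Bool))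
      fun a => (V a).map Encodable.encode := hV.1.1
  obtain ⟨cV, hEV⟩ := Nat.Partrec.Code.exists_code.1 hV1
  have hf1 : Nat.Partrec fun n => Part.bind
      ((Encodable.decode (α := List Bool × ℕ) n : Option (List Bool × ℕ)) : Part (List Bool × ℕ))
      fun q => (Part.assert (f q.1 ≤ q.2) fun _ => Part.some ()).map Encodable.encode := hf
  obtain ⟨cf, hEf⟩ := Nat.Partrec.Code.exists_code.1 hf1
  -- the machine is a PF machine; get the optimality constant
  have hPF : PFMachine (machC cV cf c) := ⟨machC_partrec cV cf c, machC_prefixFree cV cf c⟩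
  obtain ⟨d, hd⟩ := hV.2 (machC cV cf c) hPF
  -- bound on E
  obtain ⟨b, hb⟩ := (hE.image Encodable.encode).bddAbove
  set k := b + d + 2 with hk
  -- bad sets
  have hbad1 : {s : List Bool | Encodable.encode s < k}.Finite :=
    (Set.finite_Iio k).preimage (encode_injective.injOn)
  have hbad2 : {s : List Bool | ∃ p : List Bool, s ∈ V p ∧ p.length < 2 * k}.Finite := by
    have hP : {p : List Bool | p.length < 2 * k}.Finite := List.finite_length_lt _ _
    refine (hP.biUnion (t := fun p => {s : List Bool | s ∈ V p}) fun p _ => ?_).subset ?_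
    · exact Set.Subsingleton.finite fun x hx y hy => Part.mem_unique hx hy
    · rintro s ⟨p, hp, hlen⟩
      exact Set.mem_biUnion hlen hp
  -- choose a good string
  have hne := (((hTinf.diff hE).diff hbad1).diff hbad2).nonempty
  obtain ⟨s₀, hs₀⟩ := hne
  obtain ⟨⟨⟨hs₀T, hs₀E⟩, hs₀1⟩, hs₀2⟩ := hs₀
  simp only [Set.mem_setOf_eq, not_lt] at hs₀T hs₀1
  -- s₀ halts
  obtain ⟨t, ht⟩ := CFD.halt_exists hEV hEf (hfin s₀) hs₀T
  -- Fm hits s₀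
  have hFm : Fm cV cf c k (Nat.pair (Encodable.encode s₀) t) = some s₀ := by
    rw [Fm_eq_some, Nat.unpair_pair]
    refine ⟨rfl, hs₀1, ht, badList_eq_nil.2 fun p hp => ?_⟩
    by_contra hpl
    exact hs₀2 ⟨p, CFD.progs_sound hEV hp, by omega⟩
  obtain ⟨s', hs'⟩ := machC_dom_of hFm
  obtain ⟨j, hj⟩ := mem_machC_elim hs'
  rw [Fm_eq_some] at hj
  obtain ⟨hj1, hj2, hj3, hj4⟩ := hj
  -- s' is not in E
  have hs'E : ¬ f s' < {p : List Bool | s' ∈ V p}.ncard + c := by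
    intro hmem
    have h1 : Encodable.encode s' ≤ b := hb (Set.mem_image_of_mem _ hmem)
    omega
  rw [not_lt] at hs'E
  -- all programs for s' are long
  have hfull := CFD.halt_full hEV hEf (hfin s') hs'E hj3
  -- optimality gives a short program
  obtain ⟨q, hq, hqlen⟩ := hd _ _ hs'
  have hq2 : 2 * k ≤ q.length := badList_eq_nil.1 hj4 q ((hfull q).2 hq)
  simp only [List.length_append, List.length_replicate, List.length_cons,
    List.length_nil] at hqlen
  omega
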